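/- Let X be a shift space with a synchronizing word v, and suppose Σ_{n=1}^∞ Λ_n(B) e^{−nP} < ∞, where B is the set of words in L not containing v. Then there exists a word u ∈ L such that vuv ∈ L. -/

import Mathlib

open Filter Real

/-- The shift map on bi-infinite sequences. -/
def shift {A : Type*} (x : ℤ → A) : ℤ → A := fun n => x (n + 1)

/-- Birkhoff sum `S_n φ`. -/
noncomputable def birk {A : Type*} (φ : (ℤ → A) → ℝ) (n : ℕ) (x : ℤ → A) : ℝ :=
  ∑ k ∈ Finset.range n, φ (shift^[k] x)

/-- Forward cylinder of a word `w : List A` inside `X`. -/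
def cylL {A : Type*} (X : Set (ℤ → A)) (w : List A) : Set (ℤ → A) :=
  {x ∈ X | ∀ i : Fin w.length, x ((i : ℕ) : ℤ) = w.get i}

/-- The language of `X` (as a set of words). -/
def langSet {A : Type*} (X : Set (ℤ → A)) : Set (List A) :=
  {w : List A | (cylL X w).Nonempty}

/-- The weight `Φ(w) = sup_{x ∈ [w]^+} S_{|w|} φ(x)`. -/
noncomputable def PhiL {A : Type*} (X : Set (ℤ → A)) (φ : (ℤ → A) → ℝ) (w : List A) : ℝ :=
  sSup (birk φ w.length '' cylL X w)

open Classical in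
/-- Partition sum restricted to a collection of words:
`Λ_n(D) = Σ_{w ∈ D, |w| = n} e^{Φ(w)}`. -/
noncomputable def LamD {A : Type*} [Fintype A] (X : Set (ℤ → A)) (φ : (ℤ → A) → ℝ)
    (D : Set (List A)) (n : ℕ) : ℝ :=
  ∑ w : Fin n → A, if List.ofFn w ∈ D then Real.exp (PhiL X φ (List.ofFn w)) else 0

lemma shift_iter {A : Type*} (x : ℤ → A) (m : ℕ) (n : ℤ) : shift^[m] x n = x (n + m) := by
  induction m generalizing n with
  | zero => simp
  | succ m ih =>
    rw [Function.iterate_succ_apply']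
    show shift^[m] x (n+1) = _
    rw [ih]
    congr 1
    push_cast
    ring

lemma mem_shift_iter {A : Type*} {X : Set (ℤ → A)} (hXinv : shift '' X = X)
    {x : ℤ → A} (hx : x ∈ X) (m : ℕ) : shift^[m] x ∈ X := by
  induction m with
  | zero => exact hx
  | succ m ih =>
    rw [Function.iterate_succ_apply']
    rw [← hXinv]
    exact Set.mem_image_of_mem _ ih

lemma cyl_mem_sub {A : Type*} {X : Set (ℤ → A)} (hXinv : shift '' X = X)
    {x : ℤ → A} {a w b : List A} (hx : x ∈ cylL X (a ++ w ++ b)) :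
    shift^[a.length] x ∈ cylL X w := by
  obtain ⟨hxX, hcoord⟩ := hx
  refine ⟨mem_shift_iter hXinv hxX _, ?_⟩
  intro i
  have hlen : (i : ℕ) + a.length < (a ++ w ++ b).length := by
    simp [List.length_append]
    omega
  have := hcoord ⟨(i : ℕ) + a.length, hlen⟩
  rw [shift_iter]
  push_cast at this
  simp only [List.get_eq_getElem] at this ⊢
  rw [this]
  rw [List.getElem_append_left (by simp; omega : (i : ℕ) + a.length < (a ++ w).length)]
  rw [List.getElem_append_right (by omega : a.length ≤ (i : ℕ) + a.length)]
  congr 1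
  omega

lemma infix_lang {A : Type*} {X : Set (ℤ → A)} (hXinv : shift '' X = X)
    {w w' : List A} (hw : w ∈ langSet X) (h : w' <:+: w) : w' ∈ langSet X := by
  obtain ⟨x, hx⟩ := hw
  obtain ⟨a, b, rfl⟩ := h
  exact ⟨_, cyl_mem_sub hXinv hx⟩

lemma birk_add {A : Type*} (φ : (ℤ → A) → ℝ) (m n : ℕ) (x : ℤ → A) :
    birk φ (m + n) x = birk φ m x + birk φ n (shift^[m] x) := by
  unfold birk
  rw [Finset.sum_range_add]
  congr 1
  apply Finset.sum_congr rfl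
  intro k _
  rw [← Function.iterate_add_apply]
  rw [Nat.add_comm m k]

lemma exists_bound {A : Type*} [Fintype A] [TopologicalSpace A] [DiscreteTopology A]
    {X : Set (ℤ → A)} (hXcl : IsClosed X) {φ : (ℤ → A) → ℝ} (hφ : ContinuousOn φ X) :
    ∃ C : ℝ, 0 ≤ C ∧ ∀ x ∈ X, |φ x| ≤ C := by
  have : CompactSpace A := Finite.compactSpace
  have hK : IsCompact X := hXcl.isCompact
  obtain ⟨C, hC⟩ := hK.exists_bound_of_continuousOn hφ
  exact ⟨max C 0, le_max_right _ _, fun x hx => le_trans (hC x hx) (le_max_left _ _)⟩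

lemma birk_bound {A : Type*} {X : Set (ℤ → A)} (hXinv : shift '' X = X)
    {φ : (ℤ → A) → ℝ} {C : ℝ} (hC : ∀ x ∈ X, |φ x| ≤ C) (n : ℕ) {x : ℤ → A} (hx : x ∈ X) :
    |birk φ n x| ≤ n * C := by
  calc |birk φ n x| ≤ ∑ k ∈ Finset.range n, |φ (shift^[k] x)| := Finset.abs_sum_le_sum_abs _ _
    _ ≤ ∑ k ∈ Finset.range n, C :=
        Finset.sum_le_sum fun k _ => hC _ (mem_shift_iter hXinv hx k)
    _ = n * C := by simp [mul_comm]

lemma bddAbove_birk {A : Type*} {X : Set (ℤ → A)} (hXinv : shift '' X = X)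
    {φ : (ℤ → A) → ℝ} {C : ℝ} (hC : ∀ x ∈ X, |φ x| ≤ C) (n : ℕ) (w : List A) :
    BddAbove (birk φ n '' cylL X w) := by
  refine ⟨n * C, ?_⟩
  rintro y ⟨x, hx, rfl⟩
  exact le_trans (le_abs_self _) (birk_bound hXinv hC n hx.1)

lemma cyl_append_left {A : Type*} {X : Set (ℤ → A)} {a b : List A} {x : ℤ → A}
    (hx : x ∈ cylL X (a ++ b)) : x ∈ cylL X a := by
  obtain ⟨hxX, hcoord⟩ := hx
  refine ⟨hxX, fun i => ?_⟩
  have hl : (i : ℕ) < (a ++ b).length := by simp; omega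
  have := hcoord ⟨i, hl⟩
  simp only [List.get_eq_getElem] at this ⊢
  rw [this, List.getElem_append_left i.isLt]

lemma PhiL_append_le {A : Type*} {X : Set (ℤ → A)} (hXinv : shift '' X = X)
    {φ : (ℤ → A) → ℝ} {C : ℝ} (hC : ∀ x ∈ X, |φ x| ≤ C)
    {a b : List A} (hab : (a ++ b) ∈ langSet X) :
    PhiL X φ (a ++ b) ≤ PhiL X φ a + PhiL X φ b := by
  obtain ⟨x0, hx0⟩ := hab
  unfold PhiL
  apply csSup_le ⟨_, Set.mem_image_of_mem _ hx0⟩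
  rintro y ⟨x, hx, rfl⟩
  rw [List.length_append, birk_add]
  have h1 : birk φ a.length x ≤ sSup (birk φ a.length '' cylL X a) :=
    le_csSup (bddAbove_birk hXinv hC _ _) (Set.mem_image_of_mem _ (cyl_append_left hx))
  have h2 : birk φ b.length (shift^[a.length] x) ≤ sSup (birk φ b.length '' cylL X b) := by
    apply le_csSup (bddAbove_birk hXinv hC _ _)
    apply Set.mem_image_of_mem
    have : x ∈ cylL X (a ++ b ++ []) := by simpa using hx
    exact cyl_mem_sub hXinv this
  linarith

open Classical in
lemma LamD_nonneg {A : Type*} [Fintype A] (X : Set (ℤ → A)) (φ : (ℤ → A) → ℝ)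
    (D : Set (List A)) (n : ℕ) : 0 ≤ LamD X φ D n :=
  Finset.sum_nonneg fun _ _ => by positivity

open Classical in
lemma exp_PhiL_le_LamD {A : Type*} [Fintype A] (X : Set (ℤ → A)) (φ : (ℤ → A) → ℝ)
    (D : Set (List A)) {n : ℕ} {f : Fin n → A} (h : List.ofFn f ∈ D) :
    Real.exp (PhiL X φ (List.ofFn f)) ≤ LamD X φ D n := by
  classical
  have := Finset.single_le_sum (f := fun g : Fin n → A =>
    if List.ofFn g ∈ D then Real.exp (PhiL X φ (List.ofFn g)) else 0)
    (fun _ _ => by positivity) (Finset.mem_univ f)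
  simpa [LamD, h] using this

lemma LamD_pos {A : Type*} [Fintype A] (X : Set (ℤ → A)) (φ : (ℤ → A) → ℝ)
    {x : ℤ → A} (hx : x ∈ X) (n : ℕ) : 0 < LamD X φ (langSet X) n := by
  have hmem : List.ofFn (fun i : Fin n => x i) ∈ langSet X := by
    refine ⟨x, hx, fun i => ?_⟩
    simp [List.getElem_ofFn]
  calc (0:ℝ) < Real.exp (PhiL X φ (List.ofFn fun i : Fin n => x i)) := Real.exp_pos _
    _ ≤ _ := exp_PhiL_le_LamD X φ _ hmem

open Classical in
lemma LamD_submul {A : Type*} [Fintype A] [TopologicalSpace A] [DiscreteTopology A]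
    {X : Set (ℤ → A)} (hXcl : IsClosed X) (hXinv : shift '' X = X)
    {φ : (ℤ → A) → ℝ} (hφ : ContinuousOn φ X) (m n : ℕ) :
    LamD X φ (langSet X) (m + n) ≤ LamD X φ (langSet X) m * LamD X φ (langSet X) n := by
  obtain ⟨C, hC0, hC⟩ := exists_bound hXcl hφ
  set L := langSet X with hL
  let e : (Fin m → A) × (Fin n → A) ≃ (Fin (m + n) → A) :=
    (Equiv.sumArrowEquivProdArrow (Fin m) (Fin n) A).symm.trans
      (Equiv.arrowCongr finSumFinEquiv (Equiv.refl A))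
  have hofFn : ∀ p : (Fin m → A) × (Fin n → A),
      List.ofFn (e p) = List.ofFn p.1 ++ List.ofFn p.2 := by
    intro p
    rw [List.ofFn_add]
    congr 1
    · congr 1
      funext i
      show Sum.elim p.1 p.2 (finSumFinEquiv.symm _) = _
      rw [show Fin.castLE _ i = Fin.castAdd n i from rfl, finSumFinEquiv_symm_apply_castAdd]
      rfl
    · congr 1
      funext i
      show Sum.elim p.1 p.2 (finSumFinEquiv.symm _) = _
      rw [finSumFinEquiv_symm_apply_natAdd]
      rfl
  calc LamD X φ L (m + n)
      = ∑ p : (Fin m → A) × (Fin n → A),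
          (if List.ofFn (e p) ∈ L then Real.exp (PhiL X φ (List.ofFn (e p))) else 0) := by
        rw [LamD]
        exact (Equiv.sum_comp e _).symm
    _ ≤ ∑ p : (Fin m → A) × (Fin n → A),
          (if List.ofFn p.1 ∈ L then Real.exp (PhiL X φ (List.ofFn p.1)) else 0) *
          (if List.ofFn p.2 ∈ L then Real.exp (PhiL X φ (List.ofFn p.2)) else 0) := by
        apply Finset.sum_le_sum
        intro p _
        rw [hofFn p]
        by_cases hw : List.ofFn p.1 ++ List.ofFn p.2 ∈ L
        · rw [if_pos hw]
          have h1 : List.ofFn p.1 ∈ L := infix_lang hXinv hw ⟨[], List.ofFn p.2, by simp⟩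
          have h2 : List.ofFn p.2 ∈ L := infix_lang hXinv hw ⟨List.ofFn p.1, [], by simp⟩
          rw [if_pos h1, if_pos h2, ← Real.exp_add]
          exact Real.exp_le_exp.2 (PhiL_append_le hXinv hC hw)
        · rw [if_neg hw]
          positivity
    _ = LamD X φ L m * LamD X φ L n := by
        rw [LamD, LamD, Fintype.sum_mul_sum, ← Fintype.sum_prod_type']

lemma exp_le_LamD {A : Type*} [Fintype A] [TopologicalSpace A] [DiscreteTopology A]
    {X : Set (ℤ → A)} (hXcl : IsClosed X) (hXinv : shift '' X = X)
    {φ : (ℤ → A) → ℝ} (hφ : ContinuousOn φ X) {x : ℤ → A} (hx : x ∈ X)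
    {P : ℝ} (hP : Tendsto (fun n : ℕ => Real.log (LamD X φ (langSet X) n) / n) atTop (nhds P))
    {n : ℕ} (hn : 1 ≤ n) : Real.exp (n * P) ≤ LamD X φ (langSet X) n := by
  set a : ℕ → ℝ := fun k => Real.log (LamD X φ (langSet X) k) with ha
  have hpos : ∀ k, 0 < LamD X φ (langSet X) k := LamD_pos X φ hx
  have hsub : ∀ m k : ℕ, a (m + k) ≤ a m + a k := by
    intro m k
    rw [ha]
    simp only
    rw [← Real.log_mul (ne_of_gt (hpos m)) (ne_of_gt (hpos k))]
    apply Real.log_le_log (hpos _)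
    exact LamD_submul hXcl hXinv hφ m k
  have hmul : ∀ k : ℕ, 1 ≤ k → a (k * n) ≤ k * a n := by
    intro k hk
    induction k with
    | zero => omega
    | succ k ih =>
      rcases Nat.eq_or_lt_of_le hk with h1 | h1
      · simp [← h1]
      · have hk1 : 1 ≤ k := by omega
        calc a ((k + 1) * n) = a (k * n + n) := by rw [Nat.succ_mul]
          _ ≤ a (k * n) + a n := hsub _ _
          _ ≤ k * a n + a n := by linarith [ih hk1]
          _ = (k + 1 : ℕ) * a n := by push_cast; ring
  have htend : Tendsto (fun k : ℕ => a (k * n) / ((k * n : ℕ) : ℝ)) atTop (nhds P) := by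
    apply hP.comp
    apply tendsto_atTop_mono (fun k => Nat.le_mul_of_pos_right k (by omega : 0 < n))
    exact tendsto_id
  have hev : ∀ᶠ k : ℕ in atTop, a (k * n) / ((k * n : ℕ) : ℝ) ≤ a n / n := by
    filter_upwards [eventually_ge_atTop 1] with k hk
    have hkn : (0 : ℝ) < ((k * n : ℕ) : ℝ) := by
      have : 0 < k * n := Nat.mul_pos (by omega) (by omega)
      exact_mod_cast this
    have h1 : a (k * n) / ((k * n : ℕ) : ℝ) ≤ ((k : ℝ) * a n) / ((k * n : ℕ) : ℝ) := by
      gcongr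
      exact hmul k hk
    refine h1.trans (le_of_eq ?_)
    rw [Nat.cast_mul, mul_div_mul_left _ _ (by exact_mod_cast (by omega : k ≠ 0) : (k:ℝ) ≠ 0)]
  have hPn : P ≤ a n / n := le_of_tendsto htend hev
  have hP2 : P * n ≤ a n := (le_div_iff₀ (by exact_mod_cast Nat.pos_of_ne_zero (by omega) : (0:ℝ) < n)).mp hPn
  calc Real.exp (n * P) = Real.exp (P * n) := by rw [mul_comm]
    _ ≤ Real.exp (a n) := Real.exp_le_exp.2 hP2
    _ = LamD X φ (langSet X) n := Real.exp_log (hpos n)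

/-- `v` occurs in `w` at position `i`. -/
def occAt {A : Type*} (v w : List A) (i : ℕ) : Prop :=
  i + v.length ≤ w.length ∧ (w.drop i).take v.length = v

lemma occAt_decomp {A : Type*} {v w : List A} {i : ℕ} (h : occAt v w i) :
    w = w.take i ++ v ++ w.drop (i + v.length) := by
  conv_lhs => rw [← List.take_append_drop i w]
  rw [List.append_assoc]
  congr 1
  conv_lhs => rw [← List.take_append_drop v.length (w.drop i)]
  rw [h.2, List.drop_drop]

lemma infix_iff_occAt {A : Type*} {v w : List A} : v <:+: w ↔ ∃ i, occAt v w i := by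
  constructor
  · rintro ⟨a, b, rfl⟩
    refine ⟨a.length, by simp only [List.length_append]; omega, ?_⟩
    rw [List.append_assoc, List.drop_left, List.take_left]
  · rintro ⟨i, h⟩
    exact ⟨w.take i, w.drop (i + v.length), (occAt_decomp h).symm⟩

lemma occAt_getElem {A : Type*} {v w : List A} {i : ℕ} (h : occAt v w i)
    (k : ℕ) (hk : k < v.length) : w[i + k]'(by have := h.1; omega) = v[k] := by
  have h2 := List.getElem_of_eq h.2.symm (w := hk)
  simp only [List.getElem_take, List.getElem_drop] at h2
  exact h2.symm

lemma sum_le_sum_inj {α β : Type*} [DecidableEq β] (s : Finset α) (t : Finset β)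
    (F : α → ℝ) (G : β → ℝ) (e : α → β) (he : Set.InjOn e s)
    (hmem : ∀ x ∈ s, e x ∈ t) (hle : ∀ x ∈ s, F x ≤ G (e x))
    (hG : ∀ y ∈ t, 0 ≤ G y) : ∑ x ∈ s, F x ≤ ∑ y ∈ t, G y := by
  calc ∑ x ∈ s, F x ≤ ∑ x ∈ s, G (e x) := Finset.sum_le_sum hle
    _ = ∑ y ∈ s.image e, G y := (Finset.sum_image (fun a ha b hb h => he ha hb h)).symm
    _ ≤ ∑ y ∈ t, G y := Finset.sum_le_sum_of_subset_of_nonneg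
        (Finset.image_subset_iff.mpr hmem) (fun y hy _ => hG y hy)

open Classical in
lemma LamD_count {A : Type*} [Fintype A] [TopologicalSpace A] [DiscreteTopology A]
    {X : Set (ℤ → A)} (hXcl : IsClosed X) (hXinv : shift '' X = X)
    {φ : (ℤ → A) → ℝ} (hφ : ContinuousOn φ X) {v : List A} (hv : v ≠ [])
    (hno : ∀ u : List A, (v ++ u ++ v) ∉ langSet X) (n : ℕ) :
    LamD X φ (langSet X) n ≤
      LamD X φ {w | w ∈ langSet X ∧ ¬ v <:+: w} n +
      ∑ i ∈ Finset.range (n + 1),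
        (if i + v.length ≤ n then
          LamD X φ {w | w ∈ langSet X ∧ ¬ v <:+: w} i *
            (Real.exp (PhiL X φ v) *
              LamD X φ {w | w ∈ langSet X ∧ ¬ v <:+: w} (n - i - v.length))
         else 0) := by
  obtain ⟨C, hC0, hC⟩ := exists_bound hXcl hφ
  set L := langSet X with hLdef
  set B : Set (List A) := {w | w ∈ L ∧ ¬ v <:+: w} with hBdef
  have hmemB : ∀ w : List A, w ∈ B ↔ w ∈ L ∧ ¬ v <:+: w := fun w => Iff.rfl
  have hm1 : 1 ≤ v.length := List.length_pos_iff.mpr hv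
  have step1 : LamD X φ L n = LamD X φ B n +
      ∑ f : Fin n → A, (if List.ofFn f ∈ L ∧ v <:+: List.ofFn f
        then Real.exp (PhiL X φ (List.ofFn f)) else 0) := by
    rw [LamD, LamD, ← Finset.sum_add_distrib]
    apply Finset.sum_congr rfl
    intro f _
    by_cases h1 : List.ofFn f ∈ L
    · by_cases h2 : v <:+: List.ofFn f
      · rw [if_pos h1, if_neg (fun hB : List.ofFn f ∈ B => ((hmemB _).mp hB).2 h2),
          if_pos ⟨h1, h2⟩, zero_add]
      · rw [if_pos h1, if_pos ((hmemB _).mpr ⟨h1, h2⟩),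
          if_neg (fun hc : _ ∧ _ => h2 hc.2), add_zero]
    · rw [if_neg h1, if_neg (fun hB : List.ofFn f ∈ B => h1 ((hmemB _).mp hB).1),
        if_neg (fun hc : _ ∧ _ => h1 hc.1), add_zero]
  rw [step1]
  refine add_le_add_right ?_ _
  set s : Finset (Fin n → A) := Finset.univ.filter
    (fun f => List.ofFn f ∈ L ∧ v <:+: List.ofFn f) with hs
  have hrw : (∑ f : Fin n → A, if List.ofFn f ∈ L ∧ v <:+: List.ofFn f
      then Real.exp (PhiL X φ (List.ofFn f)) else 0)
      = ∑ f ∈ s, Real.exp (PhiL X φ (List.ofFn f)) := by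
    rw [hs, Finset.sum_filter]
  rw [hrw]
  have hex : ∀ f ∈ s, ∃ i, occAt v (List.ofFn f) i := by
    intro f hf
    rw [hs, Finset.mem_filter] at hf
    exact infix_iff_occAt.mp hf.2.2
  set fI : (Fin n → A) → ℕ := fun f =>
    if h : ∃ i, occAt v (List.ofFn f) i then Nat.find h else 0 with hfI
  have hfI_spec : ∀ f ∈ s, occAt v (List.ofFn f) (fI f) ∧
      ∀ k < fI f, ¬ occAt v (List.ofFn f) k := by
    intro f hf
    have h := hex f hf
    rw [hfI]
    simp only [dif_pos h]
    exact ⟨Nat.find_spec h, fun k hk => Nat.find_min h hk⟩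
  have hmaps : ∀ f ∈ s, fI f ∈ Finset.range (n + 1) := by
    intro f hf
    have h1 := (hfI_spec f hf).1.1
    rw [List.length_ofFn] at h1
    rw [Finset.mem_range]
    omega
  rw [← Finset.sum_fiberwise_of_maps_to hmaps (fun f => Real.exp (PhiL X φ (List.ofFn f)))]
  apply Finset.sum_le_sum
  intro i _
  by_cases hin : i + v.length ≤ n
  case neg =>
    rw [if_neg hin]
    have hempty : s.filter (fun f => fI f = i) = ∅ := by
      apply Finset.eq_empty_of_forall_notMem
      intro f hf
      rw [Finset.mem_filter] at hf
      have h1 := (hfI_spec f hf.1).1.1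
      rw [List.length_ofFn, hf.2] at h1
      omega
    rw [hempty, Finset.sum_empty]
  case pos =>
    rw [if_pos hin]
    set j := n - i - v.length with hj
    set Ψ : (Fin n → A) → (Fin i → A) × (Fin j → A) := fun f =>
      (fun k : Fin i => f ⟨k, by have := k.isLt; omega⟩,
       fun k : Fin j => f ⟨i + v.length + k, by have := k.isLt; omega⟩) with hΨ
    set G : (Fin i → A) × (Fin j → A) → ℝ := fun p =>
      (if List.ofFn p.1 ∈ B then Real.exp (PhiL X φ (List.ofFn p.1)) else 0) *
      (Real.exp (PhiL X φ v) *
        (if List.ofFn p.2 ∈ B then Real.exp (PhiL X φ (List.ofFn p.2)) else 0)) with hG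
    have hfacts : ∀ f ∈ s.filter (fun f => fI f = i),
        List.ofFn f ∈ L ∧ occAt v (List.ofFn f) i ∧
          (∀ k < i, ¬ occAt v (List.ofFn f) k) := by
      intro f hf
      rw [Finset.mem_filter] at hf
      obtain ⟨hfs, hfi⟩ := hf
      have hL : List.ofFn f ∈ L := by
        rw [hs, Finset.mem_filter] at hfs
        exact hfs.2.1
      have h1 := (hfI_spec f hfs).1
      have h2 := (hfI_spec f hfs).2
      rw [hfi] at h1 h2
      exact ⟨hL, h1, h2⟩
    have hcomp1 : ∀ f : Fin n → A, List.ofFn (Ψ f).1 = (List.ofFn f).take i := by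
      intro f
      apply List.ext_getElem
      · rw [List.length_ofFn, List.length_take, List.length_ofFn]
        omega
      · intro k h1 h2
        rw [List.getElem_ofFn, List.getElem_take, List.getElem_ofFn]
    have hcomp2 : ∀ f : Fin n → A,
        List.ofFn (Ψ f).2 = (List.ofFn f).drop (i + v.length) := by
      intro f
      apply List.ext_getElem
      · rw [List.length_ofFn, List.length_drop, List.length_ofFn]
        omega
      · intro k h1 h2
        rw [List.getElem_ofFn, List.getElem_drop, List.getElem_ofFn]
    have hkey : ∑ f ∈ s.filter (fun f => fI f = i),
        Real.exp (PhiL X φ (List.ofFn f)) ≤ ∑ p : (Fin i → A) × (Fin j → A), G p := by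
      apply sum_le_sum_inj _ _ _ _ Ψ ?_ (fun _ _ => Finset.mem_univ _) ?_ ?_
      · -- injectivity
        intro f1 h1 f2 h2 heq
        rw [Finset.mem_coe] at h1 h2
        obtain ⟨-, hocc1, -⟩ := hfacts f1 h1
        obtain ⟨-, hocc2, -⟩ := hfacts f2 h2
        funext k
        have hk := k.isLt
        rcases lt_or_ge (k : ℕ) i with h | h
        · have := congrFun (congrArg Prod.fst heq) ⟨k, h⟩
          simpa using this
        · rcases lt_or_ge (k : ℕ) (i + v.length) with h' | h'
          · have e1 := occAt_getElem hocc1 ((k : ℕ) - i) (by omega)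
            have e2 := occAt_getElem hocc2 ((k : ℕ) - i) (by omega)
            rw [List.getElem_ofFn] at e1 e2
            have hik : i + ((k : ℕ) - i) = (k : ℕ) := by omega
            have e1' : f1 k = v[(k : ℕ) - i]'(by omega) := by
              rw [← e1]
              congr 1
              exact Fin.ext (by simp [hik])
            have e2' : f2 k = v[(k : ℕ) - i]'(by omega) := by
              rw [← e2]
              congr 1
              exact Fin.ext (by simp [hik])
            rw [e1', e2']
          · have := congrFun (congrArg Prod.snd heq) ⟨(k : ℕ) - i - v.length, by omega⟩
            simp only [hΨ] at this
            have hik : i + v.length + ((k : ℕ) - i - v.length) = (k : ℕ) := by omega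
            have e1' : f1 ⟨i + v.length + ((k : ℕ) - i - v.length), by omega⟩ = f1 k := by
              congr 1
              exact Fin.ext (by simp [hik])
            have e2' : f2 ⟨i + v.length + ((k : ℕ) - i - v.length), by omega⟩ = f2 k := by
              congr 1
              exact Fin.ext (by simp [hik])
            rw [← e1', ← e2']
            exact this
      · -- pointwise bound
        intro f hf
        obtain ⟨hL, hocc, hmin⟩ := hfacts f hf
        have hwlen : (List.ofFn f).length = n := List.length_ofFn (f := f)
        have hdec := occAt_decomp hocc
        have haL : (List.ofFn f).take i ∈ L := by
          apply infix_lang hXinv hL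
          exact ⟨[], v ++ (List.ofFn f).drop (i + v.length), by
            rw [List.nil_append, ← List.append_assoc, ← hdec]⟩
        have hbL : (List.ofFn f).drop (i + v.length) ∈ L := by
          apply infix_lang hXinv hL
          exact ⟨(List.ofFn f).take i ++ v, [], by
            rw [List.append_nil, List.append_assoc, ← List.append_assoc, ← hdec]⟩
        have haB : ¬ v <:+: (List.ofFn f).take i := by
          rintro ⟨c, d, hcd⟩
          have hlc : c.length + v.length + d.length = i := by
            have h1 := congrArg List.length hcd
            simp only [List.length_append, List.length_take] at h1
            omega
          apply hmin c.length (by omega)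
          constructor
          · omega
          · have hw2 : List.ofFn f = c ++ (v ++ (d ++ v ++
                (List.ofFn f).drop (i + v.length))) := by
              conv_lhs => rw [hdec, ← hcd]
              simp [List.append_assoc]
            rw [hw2, List.drop_left, List.take_left]
        have hbB : ¬ v <:+: (List.ofFn f).drop (i + v.length) := by
          rintro ⟨c, d, hcd⟩
          apply hno c
          apply infix_lang hXinv hL
          refine ⟨(List.ofFn f).take i, d, ?_⟩
          have : (List.ofFn f).take i ++ (v ++ c ++ v) ++ d =
              (List.ofFn f).take i ++ v ++ (c ++ v ++ d) := by
            simp [List.append_assoc]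
          rw [this, hcd, ← hdec]
        have hw2 : List.ofFn f = (List.ofFn f).take i ++
            (v ++ (List.ofFn f).drop (i + v.length)) := by
          rw [← List.append_assoc, ← hdec]
        have hvbL : (v ++ (List.ofFn f).drop (i + v.length)) ∈ L := by
          apply infix_lang hXinv hL
          exact ⟨(List.ofFn f).take i, [], by rw [List.append_nil, ← hw2]⟩
        have hΦ : PhiL X φ (List.ofFn f) ≤ PhiL X φ ((List.ofFn f).take i) +
            (PhiL X φ v + PhiL X φ ((List.ofFn f).drop (i + v.length))) := by
          have h1 : PhiL X φ (List.ofFn f) ≤ PhiL X φ ((List.ofFn f).take i) +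
              PhiL X φ (v ++ (List.ofFn f).drop (i + v.length)) := by
            conv_lhs => rw [hw2]
            exact PhiL_append_le hXinv hC (hw2 ▸ hL)
          have h2 := PhiL_append_le hXinv hC hvbL
          linarith
        show Real.exp (PhiL X φ (List.ofFn f)) ≤ G (Ψ f)
        rw [hG]
        simp only
        rw [hcomp1, hcomp2]
        rw [if_pos ((hmemB _).mpr ⟨haL, haB⟩), if_pos ((hmemB _).mpr ⟨hbL, hbB⟩),
          ← Real.exp_add, ← Real.exp_add]
        exact Real.exp_le_exp.2 (by linarith)
      · intro p _
        rw [hG]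
        simp only
        positivity
    refine hkey.trans (le_of_eq ?_)
    simp only [LamD]
    rw [Fintype.sum_prod_type]
    rw [hG]
    simp only
    calc ∑ g : Fin i → A, ∑ h : Fin j → A,
          (if List.ofFn g ∈ B then Real.exp (PhiL X φ (List.ofFn g)) else 0) *
          (Real.exp (PhiL X φ v) *
            (if List.ofFn h ∈ B then Real.exp (PhiL X φ (List.ofFn h)) else 0))
        = ∑ g : Fin i → A,
          (if List.ofFn g ∈ B then Real.exp (PhiL X φ (List.ofFn g)) else 0) *
          (Real.exp (PhiL X φ v) *
            ∑ h : Fin j → A,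
              (if List.ofFn h ∈ B then Real.exp (PhiL X φ (List.ofFn h)) else 0)) := by
          apply Finset.sum_congr rfl
          intro g _
          rw [← Finset.mul_sum, ← Finset.mul_sum]
      _ = _ := by
          rw [← Finset.sum_mul]
          congr 1
          · exact Finset.sum_congr rfl fun w _ => by congr
          · congr 1
            exact Finset.sum_congr rfl fun w _ => by congr

/-- If `v` is a synchronizing word and `Σ_n Λ_n(B) e^{−nP} < ∞`, where `B` is the set of
words of the language not containing `v`, then there is a word `u` with `vuv ∈ L`. -/
theorem exists_connecting_word {A : Type*} [Fintype A]
    [TopologicalSpace A] [DiscreteTopology A]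
    (X : Set (ℤ → A)) (hXcl : IsClosed X) (hXinv : shift '' X = X)
    (φ : (ℤ → A) → ℝ) (hφ : ContinuousOn φ X)
    (v : List A) (hvL : v ∈ langSet X)
    (hsync : ∀ u w : List A, (u ++ v) ∈ langSet X → (v ++ w) ∈ langSet X →
      (u ++ v ++ w) ∈ langSet X)
    (P : ℝ)
    (hP : Tendsto (fun n : ℕ => Real.log (LamD X φ (langSet X) n) / n) atTop (nhds P))
    (hsum : Summable (fun n : ℕ =>
      LamD X φ {w | w ∈ langSet X ∧ ¬ v <:+: w} n * Real.exp (-(n : ℝ) * P))) :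
    ∃ u : List A, (v ++ u ++ v) ∈ langSet X := by
  by_contra hcon
  push_neg at hcon
  by_cases hv : v = []
  · exact absurd (by simpa [hv] using hvL) (by simpa [hv] using hcon [])
  obtain ⟨x, hxcyl⟩ := hvL
  have hxX : x ∈ X := hxcyl.1
  obtain ⟨C, hC0, hC⟩ := exists_bound hXcl hφ
  set B : Set (List A) := {w | w ∈ langSet X ∧ ¬ v <:+: w} with hB
  set a : ℕ → ℝ := fun n => LamD X φ B n * Real.exp (-(n : ℝ) * P) with ha
  have hsum' : Summable a := hsum
  have ha0 : ∀ n, 0 ≤ a n := fun n => mul_nonneg (LamD_nonneg _ _ _ _) (Real.exp_pos _).le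
  set S := ∑' n, a n with hS
  have hS0 : 0 ≤ S := tsum_nonneg ha0
  set K := Real.exp (PhiL X φ v) * Real.exp (-(v.length : ℝ) * P) with hK
  have hK0 : 0 ≤ K := by positivity
  have main : ∀ n : ℕ, 1 ≤ n → 1 ≤ a n + ∑ i ∈ Finset.range (n + 1),
      (if i + v.length ≤ n then a i * (K * a (n - i - v.length)) else 0) := by
    intro n hn
    have h1 : Real.exp (n * P) ≤ LamD X φ (langSet X) n :=
      exp_le_LamD hXcl hXinv hφ hxX hP hn
    have h2 := LamD_count hXcl hXinv hφ hv hcon n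
    calc (1 : ℝ) = Real.exp (n * P) * Real.exp (-(n : ℝ) * P) := by
          rw [← Real.exp_add, show (n : ℝ) * P + -(n : ℝ) * P = 0 by ring, Real.exp_zero]
      _ ≤ LamD X φ (langSet X) n * Real.exp (-(n : ℝ) * P) :=
          mul_le_mul_of_nonneg_right h1 (Real.exp_pos _).le
      _ ≤ (LamD X φ B n + ∑ i ∈ Finset.range (n + 1),
            (if i + v.length ≤ n then
              LamD X φ B i * (Real.exp (PhiL X φ v) * LamD X φ B (n - i - v.length))
             else 0)) * Real.exp (-(n : ℝ) * P) :=
          mul_le_mul_of_nonneg_right h2 (Real.exp_pos _).le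
      _ = a n + ∑ i ∈ Finset.range (n + 1),
            (if i + v.length ≤ n then a i * (K * a (n - i - v.length)) else 0) := by
          rw [add_mul, Finset.sum_mul]
          congr 1
          apply Finset.sum_congr rfl
          intro i _
          by_cases hin : i + v.length ≤ n
          · rw [if_pos hin, if_pos hin]
            have h5 : i ≤ n := by omega
            have h6 : v.length ≤ n - i := by omega
            have hcast : ((n - i - v.length : ℕ) : ℝ) = (n : ℝ) - i - v.length := by
              rw [Nat.cast_sub h6, Nat.cast_sub h5]
            have hexp : Real.exp (-(n : ℝ) * P) = Real.exp (-(i : ℝ) * P) *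
                (Real.exp (-(v.length : ℝ) * P) *
                  Real.exp (-((n - i - v.length : ℕ) : ℝ) * P)) := by
              rw [← Real.exp_add, ← Real.exp_add]
              congr 1
              rw [hcast]
              ring
            rw [hexp, ha, hK]
            simp only
            ring
          · rw [if_neg hin, if_neg hin, zero_mul]
  have sumbound : ∀ N : ℕ, (N : ℝ) ≤ S + K * (S * S) := by
    intro N
    have hpart1 : ∑ n ∈ Finset.Icc 1 N, a n ≤ S :=
      Summable.sum_le_tsum _ (fun i _ => ha0 i) hsum'
    have hrange : ∑ i ∈ Finset.range (N + 1), a i ≤ S :=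
      Summable.sum_le_tsum _ (fun i _ => ha0 i) hsum'
    have hrange0 : 0 ≤ ∑ i ∈ Finset.range (N + 1), a i :=
      Finset.sum_nonneg fun i _ => ha0 i
    have hpart2 : ∑ n ∈ Finset.Icc 1 N, ∑ i ∈ Finset.range (n + 1),
        (if i + v.length ≤ n then a i * (K * a (n - i - v.length)) else 0)
        ≤ K * (S * S) := by
      have hstep : ∀ n ∈ Finset.Icc 1 N, ∑ i ∈ Finset.range (n + 1),
          (if i + v.length ≤ n then a i * (K * a (n - i - v.length)) else 0)
          = K * ∑ i ∈ Finset.range (n + 1),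
            (if i + v.length ≤ n then a i * a (n - i - v.length) else 0) := by
        intro n _
        rw [Finset.mul_sum]
        apply Finset.sum_congr rfl
        intro i _
        by_cases hin : i + v.length ≤ n
        · rw [if_pos hin, if_pos hin]; ring
        · rw [if_neg hin, if_neg hin, mul_zero]
      rw [Finset.sum_congr rfl hstep, ← Finset.mul_sum]
      apply mul_le_mul_of_nonneg_left ?_ hK0
      -- double sum bound
      rw [show (∑ n ∈ Finset.Icc 1 N, ∑ i ∈ Finset.range (n + 1),
          (if i + v.length ≤ n then a i * a (n - i - v.length) else 0))
          = ∑ x ∈ (Finset.Icc 1 N).sigma (fun n => Finset.range (n + 1)),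
            (if x.2 + v.length ≤ x.1 then a x.2 * a (x.1 - x.2 - v.length) else 0) from
        (Finset.sum_sigma (Finset.Icc 1 N) (fun n => Finset.range (n + 1))
          (fun x => if x.2 + v.length ≤ x.1 then a x.2 * a (x.1 - x.2 - v.length) else 0)).symm]
      rw [← Finset.sum_filter]
      have hfin : ∑ p ∈ (Finset.range (N+1)) ×ˢ (Finset.range (N+1)), a p.1 * a p.2
          = (∑ i ∈ Finset.range (N + 1), a i) * (∑ i ∈ Finset.range (N + 1), a i) := by
        rw [Finset.sum_mul_sum, Finset.sum_product]
      calc ∑ x ∈ ((Finset.Icc 1 N).sigma fun n => Finset.range (n + 1)).filter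
              (fun x => x.2 + v.length ≤ x.1), a x.2 * a (x.1 - x.2 - v.length)
          ≤ ∑ p ∈ (Finset.range (N+1)) ×ˢ (Finset.range (N+1)), a p.1 * a p.2 := by
            apply sum_le_sum_inj _ _ _ _ (fun x => (x.2, x.1 - x.2 - v.length))
            · intro x hx y hy hxy
              rw [Finset.mem_coe, Finset.mem_filter, Finset.mem_sigma] at hx hy
              obtain ⟨⟨hx1, hx2⟩, hx3⟩ := hx
              obtain ⟨⟨hy1, hy2⟩, hy3⟩ := hy
              have h1 : x.2 = y.2 := congrArg Prod.fst hxy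
              have h2 : x.1 - x.2 - v.length = y.1 - y.2 - v.length :=
                congrArg Prod.snd hxy
              have h3 : x.1 = y.1 := by omega
              obtain ⟨x1, x2⟩ := x
              obtain ⟨y1, y2⟩ := y
              simp only at h1 h3
              subst h1
              subst h3
              rfl
            · intro x hx
              rw [Finset.mem_filter, Finset.mem_sigma, Finset.mem_Icc,
                Finset.mem_range] at hx
              rw [Finset.mem_product, Finset.mem_range, Finset.mem_range]
              omega
            · intro x _
              exact le_of_eq rfl
            · intro p _
              exact mul_nonneg (ha0 _) (ha0 _)
        _ ≤ S * S := by
            rw [hfin]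
            exact mul_le_mul hrange hrange hrange0 hS0
    calc (N : ℝ) = ∑ n ∈ Finset.Icc 1 N, (1 : ℝ) := by
          rw [Finset.sum_const, Nat.card_Icc]
          simp
      _ ≤ ∑ n ∈ Finset.Icc 1 N, (a n + ∑ i ∈ Finset.range (n + 1),
            (if i + v.length ≤ n then a i * (K * a (n - i - v.length)) else 0)) :=
          Finset.sum_le_sum fun n hn => main n (Finset.mem_Icc.mp hn).1
      _ = (∑ n ∈ Finset.Icc 1 N, a n) + ∑ n ∈ Finset.Icc 1 N, ∑ i ∈ Finset.range (n + 1),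
            (if i + v.length ≤ n then a i * (K * a (n - i - v.length)) else 0) :=
          Finset.sum_add_distrib
      _ ≤ S + K * (S * S) := add_le_add hpart1 hpart2
  obtain ⟨N, hN⟩ := exists_nat_gt (S + K * (S * S))
  exact absurd (sumbound N) (by linarith)
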